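/- Let n ≥ 1 and let Y be any n×n complex matrix with trace zero. Then there exist an integer r ≥ 1, a strictly ordered dimension vector 0 < n_1 < n_2 < … < n_r = n, scalars λ_1, …, λ_{r−1} ∈ ℂ, and complex matrices α_i of size n_{i+1}×n_i and β_i of size n_i×n_{i+1} for i = 1,…,r−1 with each α_i injective and each β_i surjective, satisfying the complex moment map equations α_{i−1}β_{i−1} − β_i α_i = λ_i I_{n_i} for i = 1,…,r−1 (with α_0 = β_0 = 0), such that the trace-free part of X = α_{r−1}β_{r−1} equals Y, i.e., X − (tr X / n) I = Y. -/

import Mathlib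

open Function Matrix Module

/-- Cast a matrix along equalities of sizes. -/
def castM {p p' q q' : ℕ} (h1 : p = p') (h2 : q = q')
    (M : Matrix (Fin p) (Fin q) ℂ) : Matrix (Fin p') (Fin q') ℂ :=
  M.submatrix (Fin.cast h1.symm) (Fin.cast h2.symm)

theorem castM_self {p q : ℕ} (h1 : p = p) (h2 : q = q) (M : Matrix (Fin p) (Fin q) ℂ) :
    castM h1 h2 M = M := rfl

theorem castM_mul {p p' q q' r r' : ℕ} (h1 : p = p') (h2 h2' : q = q') (h3 : r = r')
    (M : Matrix (Fin p) (Fin q) ℂ) (N : Matrix (Fin q) (Fin r) ℂ) :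
    castM h1 h2 M * castM h2' h3 N = castM h1 h3 (M * N) := by
  subst h1; subst h2; subst h3; rfl

theorem castM_castM {p p' p'' q q' q'' : ℕ} (h1 : p = p') (h3 : p' = p'')
    (h2 : q = q') (h4 : q' = q'') (M : Matrix (Fin p) (Fin q) ℂ) :
    castM h3 h4 (castM h1 h2 M) = castM (h1.trans h3) (h2.trans h4) M := by
  subst h1; subst h2; subst h3; subst h4; rfl

theorem castM_sub {p p' q q' : ℕ} (h1 h1' : p = p') (h2 h2' : q = q')
    (M N : Matrix (Fin p) (Fin q) ℂ) :
    castM h1 h2 M - castM h1' h2' N = castM h1 h2 (M - N) := by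
  subst h1; subst h2; rfl

theorem castM_smul {p p' q q' : ℕ} (h1 : p = p') (h2 : q = q') (c : ℂ)
    (M : Matrix (Fin p) (Fin q) ℂ) :
    castM h1 h2 (c • M) = c • castM h1 h2 M := by
  subst h1; subst h2; rfl

theorem castM_one {p p' : ℕ} (h1 h2 : p = p') :
    castM h1 h2 (1 : Matrix (Fin p) (Fin p) ℂ) = 1 := by
  subst h1; rfl

theorem castM_injective_iff {p p' q q' : ℕ} (h1 : p = p') (h2 : q = q')
    (M : Matrix (Fin p) (Fin q) ℂ) :
    Injective (castM h1 h2 M).mulVecLin ↔ Injective M.mulVecLin := by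
  subst h1; subst h2; rfl

theorem castM_surjective_iff {p p' q q' : ℕ} (h1 : p = p') (h2 : q = q')
    (M : Matrix (Fin p) (Fin q) ℂ) :
    Surjective (castM h1 h2 M).mulVecLin ↔ Surjective M.mulVecLin := by
  subst h1; subst h2; rfl

/-- Realizability of a matrix as the top product of a quiver chain. -/
def Realizable (n : ℕ) (X : Matrix (Fin n) (Fin n) ℂ) : Prop :=
  ∃ (m : ℕ) (dims : ℕ → ℕ) (lam : ℕ → ℂ)
    (α : ∀ i : ℕ, Matrix (Fin (dims (i+1))) (Fin (dims i)) ℂ)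
    (β : ∀ i : ℕ, Matrix (Fin (dims i)) (Fin (dims (i+1))) ℂ)
    (hc : dims (m+1) = n),
    dims 0 = 0 ∧
    (∀ i ≤ m, dims i < dims (i+1)) ∧
    (∀ i, 1 ≤ i → i ≤ m → Function.Injective (α i).mulVecLin) ∧
    (∀ i, 1 ≤ i → i ≤ m → Function.Surjective (β i).mulVecLin) ∧
    (∀ j < m, α j * β j - β (j+1) * α (j+1) =
      lam (j+1) • (1 : Matrix (Fin (dims (j+1))) (Fin (dims (j+1))) ℂ)) ∧
    castM hc hc (α m * β m) = X

theorem realizable_zero (n : ℕ) (hn : 1 ≤ n) : Realizable n 0 := by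
  refine ⟨0, fun i => if i = 0 then 0 else n, fun _ => 0, fun _ => 0, fun _ => 0,
    by simp, by simp, ?_, by omega, by omega, by omega, ?_⟩
  · intro i hi
    have : i = 0 := by omega
    subst this
    simpa using (show 0 < n by omega)
  · simp [castM]

theorem extend {k n : ℕ} (hkn : k < n)
    (A : Matrix (Fin n) (Fin k) ℂ) (B : Matrix (Fin k) (Fin n) ℂ)
    (hA : Function.Injective A.mulVecLin) (hB : Function.Surjective B.mulVecLin)
    (lam0 : ℂ) (hZ : Realizable k (B * A + lam0 • 1)) :
    Realizable n (A * B) := by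
  obtain ⟨m, dims, lam, α, β, hc, h0, hmono, hinj, hsurj, hmom, htop⟩ := hZ
  subst hc
  rw [castM_self] at htop
  have hle : ∀ i, i ≤ m + 1 → (if i ≤ m + 1 then dims i else n) = dims i :=
    fun i h => if_pos h
  have hgt : ∀ i, m + 1 < i → (if i ≤ m + 1 then dims i else n) = n :=
    fun i h => if_neg (by omega)
  refine ⟨m+1, fun i => if i ≤ m + 1 then dims i else n,
    fun i => if i ≤ m then lam i else lam0,
    fun i => if h : i ≤ m then castM (hle _ (by omega)).symm (hle _ (by omega)).symm (α i)
      else if h2 : i = m + 1 then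
        castM (by rw [h2]; exact (hgt _ (by omega)).symm)
          (by rw [h2]; exact (hle _ (by omega)).symm) A
      else 0,
    fun i => if h : i ≤ m then castM (hle _ (by omega)).symm (hle _ (by omega)).symm (β i)
      else if h2 : i = m + 1 then
        castM (by rw [h2]; exact (hle _ (by omega)).symm)
          (by rw [h2]; exact (hgt _ (by omega)).symm) B
      else 0,
    hgt _ (by omega), by simpa using h0, ?_, ?_, ?_, ?_, ?_⟩
  · -- monotone
    intro i hi
    beta_reduce
    by_cases h : i ≤ m
    · rw [hle i (by omega), hle (i+1) (by omega)]
      exact hmono i h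
    · have : i = m + 1 := by omega
      subst this
      rw [hle (m+1) le_rfl, hgt (m+2) (by omega)]
      exact hkn
  · -- injective
    intro i h1 h2
    beta_reduce
    by_cases h : i ≤ m
    · rw [dif_pos h, castM_injective_iff]
      exact hinj i h1 h
    · have hi : i = m + 1 := by omega
      rw [dif_neg h, dif_pos hi, castM_injective_iff]
      exact hA
  · -- surjective
    intro i h1 h2
    beta_reduce
    by_cases h : i ≤ m
    · rw [dif_pos h, castM_surjective_iff]
      exact hsurj i h1 h
    · have hi : i = m + 1 := by omega
      rw [dif_neg h, dif_pos hi, castM_surjective_iff]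
      exact hB
  · -- moment map equations
    intro j hj
    beta_reduce
    by_cases h : j < m
    · rw [dif_pos (by omega : j ≤ m), dif_pos (by omega : j ≤ m),
        dif_pos (by omega : j + 1 ≤ m), dif_pos (by omega : j + 1 ≤ m),
        castM_mul, castM_mul, castM_sub, hmom j h, if_pos (by omega : j + 1 ≤ m),
        castM_smul, castM_one]
    · have hjm : j = m := by omega
      subst hjm
      rw [dif_pos le_rfl, dif_pos le_rfl, dif_neg (by omega : ¬ (j + 1 ≤ j)),
        dif_pos rfl, dif_neg (by omega : ¬ (j + 1 ≤ j)), dif_pos rfl,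
        castM_mul, castM_mul, castM_sub, if_neg (by omega : ¬ (j + 1 ≤ j))]
      have hmm : α j * β j - B * A = lam0 • 1 := by
        rw [htop]; exact add_sub_cancel_left _ _
      rw [hmm, castM_smul, castM_one]
  · -- top product
    beta_reduce
    rw [dif_neg (by omega : ¬ (m + 1 ≤ m)), dif_pos rfl,
      dif_neg (by omega : ¬ (m + 1 ≤ m)), dif_pos rfl,
      castM_mul, castM_castM, castM_self]

theorem key : ∀ n : ℕ, 1 ≤ n → ∀ X : Matrix (Fin n) (Fin n) ℂ,
    ∃ t : ℂ, Realizable n (X + t • 1) := by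
  intro n
  induction n using Nat.strong_induction_on with
  | _ n IH =>
    intro hn X
    haveI : Nonempty (Fin n) := ⟨⟨0, hn⟩⟩
    obtain ⟨μ, hμ⟩ := Module.End.exists_eigenvalue X.mulVecLin
    obtain ⟨v, hv⟩ := hμ.exists_hasEigenvector
    set f : (Fin n → ℂ) →ₗ[ℂ] (Fin n → ℂ) := (X - μ • 1).mulVecLin with hf
    have hfv : f v = 0 := by
      have h1 : X.mulVecLin v = μ • v := hv.apply_eq_smul
      rw [hf]
      simp only [Matrix.mulVecLin_apply] at h1 ⊢
      rw [Matrix.sub_mulVec, Matrix.smul_mulVec, Matrix.one_mulVec, h1, sub_self]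
    have hker : v ∈ LinearMap.ker f := hfv
    set k := finrank ℂ (LinearMap.range f) with hk
    have hrn : k + finrank ℂ (LinearMap.ker f) = n := by
      rw [hk, LinearMap.finrank_range_add_finrank_ker]
      simp
    have hkerpos : 0 < finrank ℂ (LinearMap.ker f) := by
      rw [finrank_pos_iff]
      exact ⟨⟨⟨v, hker⟩, 0, by simp [Subtype.ext_iff, hv.2]⟩⟩
    have hkn : k < n := by omega
    by_cases hk0 : k = 0
    · -- X is the scalar matrix μ • 1
      have hbot : LinearMap.range f = ⊥ := by
        rw [← Submodule.finrank_eq_zero (R := ℂ)]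
        exact hk0
      have hf0 : f = 0 := LinearMap.range_eq_bot.mp hbot
      have hX : X - μ • 1 = 0 := by
        have h2 := congrArg LinearMap.toMatrix' hf0
        rwa [hf, ← Matrix.toLin'_apply', LinearMap.toMatrix'_toLin', map_zero] at h2
      refine ⟨-μ, ?_⟩
      have : X + (-μ) • 1 = 0 := by rw [neg_smul, ← sub_eq_add_neg]; exact hX
      rw [this]
      exact realizable_zero n hn
    · -- rank factorization and recursion
      set R := LinearMap.range f with hR
      let bR : Basis (Fin k) ℂ R := Module.finBasis ℂ R
      let e : (Fin k → ℂ) ≃ₗ[ℂ] R := bR.equivFun.symm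
      let a : (Fin k → ℂ) →ₗ[ℂ] (Fin n → ℂ) := R.subtype ∘ₗ (e : (Fin k → ℂ) →ₗ[ℂ] R)
      let b : (Fin n → ℂ) →ₗ[ℂ] (Fin k → ℂ) := (e.symm : R →ₗ[ℂ] (Fin k → ℂ)) ∘ₗ f.rangeRestrict
      have hab : a ∘ₗ b = f := by
        ext x
        simp [a, b]
      set A := LinearMap.toMatrix' a with hA'
      set B := LinearMap.toMatrix' b with hB'
      have hAmul : A.mulVecLin = a := by
        rw [hA', ← Matrix.toLin'_apply']; exact Matrix.toLin'_toMatrix' a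
      have hBmul : B.mulVecLin = b := by
        rw [hB', ← Matrix.toLin'_apply']; exact Matrix.toLin'_toMatrix' b
      have hAinj : Function.Injective A.mulVecLin := by
        rw [hAmul]
        exact (Submodule.injective_subtype R).comp e.injective
      have hBsurj : Function.Surjective B.mulVecLin := by
        rw [hBmul]
        exact e.symm.surjective.comp f.surjective_rangeRestrict
      have hABX : A * B = X - μ • 1 := by
        calc A * B = LinearMap.toMatrix' (a ∘ₗ b) := (LinearMap.toMatrix'_comp a b).symm
          _ = LinearMap.toMatrix' f := by rw [hab]
          _ = X - μ • 1 := by rw [hf, ← Matrix.toLin'_apply', LinearMap.toMatrix'_toLin']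
      obtain ⟨t, hZ⟩ := IH k hkn (by omega) (B * A)
      refine ⟨-μ, ?_⟩
      have hres := extend hkn A B hAinj hBsurj t hZ
      rw [hABX] at hres
      rwa [neg_smul, ← sub_eq_add_neg]

theorem statement11 (n : ℕ) (hn : 1 ≤ n) (Y : Matrix (Fin n) (Fin n) ℂ)
    (hY : Matrix.trace Y = 0) :
    ∃ (m : ℕ) (dims : ℕ → ℕ) (lam : ℕ → ℂ)
      (α : ∀ i : ℕ, Matrix (Fin (dims (i+1))) (Fin (dims i)) ℂ)
      (β : ∀ i : ℕ, Matrix (Fin (dims i)) (Fin (dims (i+1))) ℂ)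
      (hc : dims (m+1) = n),
      dims 0 = 0 ∧
      (∀ i ≤ m, dims i < dims (i+1)) ∧
      (∀ i, 1 ≤ i → i ≤ m → Function.Injective (α i).mulVecLin) ∧
      (∀ i, 1 ≤ i → i ≤ m → Function.Surjective (β i).mulVecLin) ∧
      (∀ j < m, α j * β j - β (j+1) * α (j+1) =
        lam (j+1) • (1 : Matrix (Fin (dims (j+1))) (Fin (dims (j+1))) ℂ)) ∧
      Matrix.submatrix
          (α m * β m - (Matrix.trace (α m * β m) / (n : ℂ)) • 1)
          (Fin.cast hc.symm) (Fin.cast hc.symm) = Y := by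
  obtain ⟨t, m, dims, lam, α, β, hc, h0, hmono, hinj, hsurj, hmom, htop⟩ := key n hn Y
  refine ⟨m, dims, lam, α, β, hc, h0, hmono, hinj, hsurj, hmom, ?_⟩
  subst hc
  rw [castM_self] at htop
  have hd : 1 ≤ dims (m + 1) := hn
  have htr : Matrix.trace (α m * β m) = t * (dims (m + 1) : ℂ) := by
    rw [htop]
    simp [Matrix.trace_add, Matrix.trace_smul, Matrix.trace_one, hY, mul_comm]
  have hcast : (dims (m + 1) : ℂ) ≠ 0 := Nat.cast_ne_zero.mpr (by omega)
  show castM rfl rfl (α m * β m - (Matrix.trace (α m * β m) / (dims (m+1) : ℂ)) • 1) = Y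
  rw [castM_self, htr, mul_div_assoc, div_self hcast, mul_one, htop]
  abel
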